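/- (SEP dominates CBSEP Dirichlet form) With μ the Bernoulli(p) product measure on {0,1}^V conditioned on at least one particle, p ∈ (0,1), the SEP Dirichlet form D^SEP(f) = ½Σ_{e∈E} E_μ[(f(ω^e)−f(ω))²] (where ω^e swaps the states at the endpoints of e) satisfies D^SEP(f) ≤ ((2-p)/(1-p))·D(f) for every f : Ω₊ → ℝ, where D is the CBSEP Dirichlet form. -/
import Mathlib


open Finset

variable {V : Type*} [Fintype V] [DecidableEq V]

/-- Number of particles of a configuration. -/
def Np (ω : V → Bool) : ℕ := (Finset.univ.filter (fun x => ω x = true)).card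

/-- Configurations with at least one particle. -/
def OmegaPlus (V : Type*) [Fintype V] [DecidableEq V] : Finset (V → Bool) :=
  Finset.univ.filter (fun ω => 0 < Np ω)

/-- Bernoulli(p) product weight. -/
def bern (p : ℝ) (ω : V → Bool) : ℝ := ∏ x, if ω x = true then p else 1 - p

/-- The measure `π` conditioned on at least one particle (weight on `OmegaPlus`). -/
noncomputable def mu (p : ℝ) (ω : V → Bool) : ℝ := bern p ω / (1 - (1 - p) ^ Fintype.card V)

/-- Fill vertex `x` with a particle. -/
def fill (ω : V → Bool) (x : V) : V → Bool := Function.update ω x true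

/-- Flip the state at vertex `x`. -/
def flipAt (ω : V → Bool) (x : V) : V → Bool := Function.update ω x (!ω x)

/-- Variance of `f` under resampling the states at `x, y` from `π_x ⊗ π_y`
conditioned on the edge being non-empty. -/
noncomputable def edgeVar (p : ℝ) (f : (V → Bool) → ℝ) (x y : V) (ω : V → Bool) : ℝ :=
  let u : Bool → Bool → ℝ := fun a b => f (Function.update (Function.update ω x a) y b)
  let m : ℝ := ((1 - p) / (2 - p)) * u true false + ((1 - p) / (2 - p)) * u false true +
      (p / (2 - p)) * u true true
  ((1 - p) / (2 - p)) * (u true false - m) ^ 2 + ((1 - p) / (2 - p)) * (u false true - m) ^ 2 +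
    (p / (2 - p)) * (u true true - m) ^ 2

/-- The CBSEP Dirichlet form `D(f) = Σ_{e∈E} μ(𝟙_{E_e} Var_e(f | E_e))`,
written as half the sum over oriented edges. -/
noncomputable def dirichlet (G : SimpleGraph V) [DecidableRel G.Adj] (p : ℝ)
    (f : (V → Bool) → ℝ) : ℝ :=
  (1 / 2) * ∑ x, ∑ y ∈ G.neighborFinset x,
    ∑ ω ∈ (OmegaPlus V).filter (fun ω => ω x = true ∨ ω y = true), mu p ω * edgeVar p f x y ω

/-- Exchange the states at `x` and `y`. -/
def swapAt (ω : V → Bool) (x y : V) : V → Bool :=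
  Function.update (Function.update ω x (ω y)) y (ω x)

lemma key_alg (p a b c : ℝ) (hp0 : 0 < p) (hp1 : p < 1) :
    (a - b) ^ 2 ≤ 2 * ((2 - p) / (1 - p)) *
      (((1 - p) / (2 - p)) * (a - (((1 - p) / (2 - p)) * a + ((1 - p) / (2 - p)) * b + (p / (2 - p)) * c)) ^ 2
      + ((1 - p) / (2 - p)) * (b - (((1 - p) / (2 - p)) * a + ((1 - p) / (2 - p)) * b + (p / (2 - p)) * c)) ^ 2
      + (p / (2 - p)) * (c - (((1 - p) / (2 - p)) * a + ((1 - p) / (2 - p)) * b + (p / (2 - p)) * c)) ^ 2) := by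
  have h1 : 0 < 1 - p := by linarith
  have h2 : 0 < 2 - p := by linarith
  rw [← sub_nonneg]
  have key : 2 * ((2 - p) / (1 - p)) *
      (((1 - p) / (2 - p)) * (a - (((1 - p) / (2 - p)) * a + ((1 - p) / (2 - p)) * b + (p / (2 - p)) * c)) ^ 2
      + ((1 - p) / (2 - p)) * (b - (((1 - p) / (2 - p)) * a + ((1 - p) / (2 - p)) * b + (p / (2 - p)) * c)) ^ 2
      + (p / (2 - p)) * (c - (((1 - p) / (2 - p)) * a + ((1 - p) / (2 - p)) * b + (p / (2 - p)) * c)) ^ 2)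
      - (a - b) ^ 2
      = (p / (2 - p)) * (2 * (a - c) ^ 2 + 2 * (b - c) ^ 2 - (a - b) ^ 2) := by
    field_simp
    ring
  rw [key]
  have hab : (a - b) ^ 2 ≤ 2 * (a - c) ^ 2 + 2 * (b - c) ^ 2 := by nlinarith [sq_nonneg (a + b - 2 * c)]
  have hpr : 0 ≤ p / (2 - p) := by positivity
  have h3 : 0 ≤ 2 * (a - c) ^ 2 + 2 * (b - c) ^ 2 - (a - b) ^ 2 := by linarith
  exact mul_nonneg hpr h3

lemma bern_nonneg (p : ℝ) (hp0 : 0 < p) (hp1 : p < 1) (ω : V → Bool) : 0 ≤ bern p ω := by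
  apply Finset.prod_nonneg
  intro x _
  by_cases h : ω x = true <;> simp [h] <;> linarith

lemma mu_nonneg [Nonempty V] (p : ℝ) (hp0 : 0 < p) (hp1 : p < 1) (ω : V → Bool) :
    0 ≤ mu p ω := by
  have hcard : 1 ≤ Fintype.card V := Fintype.card_pos
  have h1 : 0 ≤ 1 - p := by linarith
  have h2 : (1 - p) ^ Fintype.card V < 1 :=
    pow_lt_one₀ h1 (by linarith) (by omega)
  exact div_nonneg (bern_nonneg p hp0 hp1 ω) (by linarith)

lemma edgeVar_nonneg (p : ℝ) (hp0 : 0 < p) (hp1 : p < 1) (f : (V → Bool) → ℝ) (x y : V)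
    (ω : V → Bool) : 0 ≤ edgeVar p f x y ω := by
  have h1 : (0:ℝ) ≤ (1 - p) / (2 - p) := div_nonneg (by linarith) (by linarith)
  have h2 : (0:ℝ) ≤ p / (2 - p) := div_nonneg (by linarith) (by linarith)
  unfold edgeVar
  dsimp only
  have s1 := sq_nonneg (f (Function.update (Function.update ω x true) y false) -
    ((1 - p) / (2 - p) * f (Function.update (Function.update ω x true) y false) +
      (1 - p) / (2 - p) * f (Function.update (Function.update ω x false) y true) +
      p / (2 - p) * f (Function.update (Function.update ω x true) y true)))
  have s2 := sq_nonneg (f (Function.update (Function.update ω x false) y true) -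
    ((1 - p) / (2 - p) * f (Function.update (Function.update ω x true) y false) +
      (1 - p) / (2 - p) * f (Function.update (Function.update ω x false) y true) +
      p / (2 - p) * f (Function.update (Function.update ω x true) y true)))
  have s3 := sq_nonneg (f (Function.update (Function.update ω x true) y true) -
    ((1 - p) / (2 - p) * f (Function.update (Function.update ω x true) y false) +
      (1 - p) / (2 - p) * f (Function.update (Function.update ω x false) y true) +
      p / (2 - p) * f (Function.update (Function.update ω x true) y true)))
  have := add_nonneg (add_nonneg (mul_nonneg h1 s1) (mul_nonneg h1 s2)) (mul_nonneg h2 s3)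
  exact this

lemma swapAt_self (ω : V → Bool) (x y : V) (h : ω x = ω y) : swapAt ω x y = ω := by
  funext z
  unfold swapAt
  by_cases hz : z = y
  · subst hz; simp [Function.update, h]
  · by_cases hz' : z = x
    · subst hz'; simp [Function.update, hz, h]
    · simp [Function.update, hz, hz']

lemma update_eq_self' (ω : V → Bool) (x : V) (b : Bool) (h : ω x = b) :
    Function.update ω x b = ω := by
  funext z
  by_cases hz : z = x
  · subst hz; simp [h]
  · simp [Function.update, hz]

lemma pointwise (p : ℝ) (hp0 : 0 < p) (hp1 : p < 1) (f : (V → Bool) → ℝ) (x y : V)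
    (ω : V → Bool) [Nonempty V] :
    mu p ω * (f (swapAt ω x y) - f ω) ^ 2 ≤
      2 * ((2 - p) / (1 - p)) * (mu p ω * edgeVar p f x y ω) := by
  have hmu := mu_nonneg p hp0 hp1 ω
  have h1 : 0 < 1 - p := by linarith
  have h2 : 0 < 2 - p := by linarith
  have hEVnn := edgeVar_nonneg p hp0 hp1 f x y ω
  by_cases hxy : ω x = ω y
  · have hc : (0:ℝ) ≤ 2 * ((2 - p) / (1 - p)) := by
      have := div_nonneg (le_of_lt h2) (le_of_lt h1)
      linarith
    have hz : mu p ω * (f ω - f ω) ^ 2 = 0 := by ring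
    rw [swapAt_self ω x y hxy, hz]
    exact mul_nonneg hc (mul_nonneg hmu hEVnn)
  · rw [show 2 * ((2 - p) / (1 - p)) * (mu p ω * edgeVar p f x y ω)
        = mu p ω * (2 * ((2 - p) / (1 - p)) * edgeVar p f x y ω) by ring]
    apply mul_le_mul_of_nonneg_left _ hmu
    set a := f (Function.update (Function.update ω x true) y false) with ha
    set b := f (Function.update (Function.update ω x false) y true) with hb
    set c := f (Function.update (Function.update ω x true) y true) with hc
    have hEV : edgeVar p f x y ω =
      ((1 - p) / (2 - p)) * (a - (((1 - p) / (2 - p)) * a + ((1 - p) / (2 - p)) * b + (p / (2 - p)) * c)) ^ 2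
      + ((1 - p) / (2 - p)) * (b - (((1 - p) / (2 - p)) * a + ((1 - p) / (2 - p)) * b + (p / (2 - p)) * c)) ^ 2
      + (p / (2 - p)) * (c - (((1 - p) / (2 - p)) * a + ((1 - p) / (2 - p)) * b + (p / (2 - p)) * c)) ^ 2 := rfl
    cases hx : ω x with
    | false =>
      have hy : ω y = true := by
        cases hyy : ω y
        · exact absurd (hx.trans hyy.symm) hxy
        · rfl
      have hfs : f (swapAt ω x y) = a := by rw [ha]; unfold swapAt; rw [hx, hy]
      have hfo : b = f ω := by
        rw [hb, update_eq_self' ω x false hx, update_eq_self' ω y true hy]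
      rw [hfs, ← hfo, hEV]
      exact key_alg p a b c hp0 hp1
    | true =>
      have hy : ω y = false := by
        cases hyy : ω y
        · rfl
        · exact absurd (hx.trans hyy.symm) hxy
      have hfs : f (swapAt ω x y) = b := by rw [hb]; unfold swapAt; rw [hx, hy]
      have hfo : a = f ω := by
        rw [ha, update_eq_self' ω x true hx, update_eq_self' ω y false hy]
      rw [hfs, ← hfo, hEV, show (b - a) ^ 2 = (a - b) ^ 2 by ring]
      exact key_alg p a b c hp0 hp1

/-- The SEP Dirichlet form `D^SEP(f) = ½Σ_{e∈E} E_μ[(f(ω^e)-f(ω))²]`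
(written over oriented edges) satisfies `D^SEP(f) ≤ ((2-p)/(1-p))·D(f)`. -/
theorem stmt12 (G : SimpleGraph V) [DecidableRel G.Adj] (p : ℝ) (hp0 : 0 < p) (hp1 : p < 1)
    (f : (V → Bool) → ℝ) :
    (1 / 4) * (∑ x, ∑ y ∈ G.neighborFinset x, ∑ ω ∈ OmegaPlus V,
        mu p ω * (f (swapAt ω x y) - f ω) ^ 2) ≤
      ((2 - p) / (1 - p)) * dirichlet G p f := by
  have h1 : 0 < 1 - p := by linarith
  have h2 : 0 < 2 - p := by linarith
  have hstep : ∀ x : V, ∀ y ∈ G.neighborFinset x,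
      ∑ ω ∈ OmegaPlus V, mu p ω * (f (swapAt ω x y) - f ω) ^ 2 ≤
      2 * ((2 - p) / (1 - p)) *
        ∑ ω ∈ (OmegaPlus V).filter (fun ω => ω x = true ∨ ω y = true),
          mu p ω * edgeVar p f x y ω := by
    intro x y _
    have : Nonempty V := ⟨x⟩
    have hsub : ∑ ω ∈ OmegaPlus V, mu p ω * (f (swapAt ω x y) - f ω) ^ 2 =
        ∑ ω ∈ (OmegaPlus V).filter (fun ω => ω x = true ∨ ω y = true),
          mu p ω * (f (swapAt ω x y) - f ω) ^ 2 := by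
      refine (Finset.sum_subset (Finset.filter_subset _ _) ?_).symm
      intro ω hmem hω
      simp only [Finset.mem_filter, hmem, true_and, not_or, Bool.not_eq_true] at hω
      rw [swapAt_self ω x y (hω.1.trans hω.2.symm), sub_self]
      ring
    rw [hsub, Finset.mul_sum]
    exact Finset.sum_le_sum fun ω _ => pointwise p hp0 hp1 f x y ω
  calc (1 / 4) * (∑ x, ∑ y ∈ G.neighborFinset x, ∑ ω ∈ OmegaPlus V,
        mu p ω * (f (swapAt ω x y) - f ω) ^ 2)
      ≤ (1 / 4) * (∑ x, ∑ y ∈ G.neighborFinset x, 2 * ((2 - p) / (1 - p)) *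
          ∑ ω ∈ (OmegaPlus V).filter (fun ω => ω x = true ∨ ω y = true),
            mu p ω * edgeVar p f x y ω) := by
        apply mul_le_mul_of_nonneg_left _ (by norm_num)
        exact Finset.sum_le_sum fun x _ => Finset.sum_le_sum (hstep x)
    _ = ((2 - p) / (1 - p)) * dirichlet G p f := by
        rw [dirichlet]
        have hx : ∀ x : V, ∑ y ∈ G.neighborFinset x, 2 * ((2 - p) / (1 - p)) *
            ∑ ω ∈ (OmegaPlus V).filter (fun ω => ω x = true ∨ ω y = true),
              mu p ω * edgeVar p f x y ω
            = 2 * ((2 - p) / (1 - p)) * ∑ y ∈ G.neighborFinset x,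
            ∑ ω ∈ (OmegaPlus V).filter (fun ω => ω x = true ∨ ω y = true),
              mu p ω * edgeVar p f x y ω := fun x => (Finset.mul_sum _ _ _).symm
        rw [Finset.sum_congr rfl fun x _ => hx x, ← Finset.mul_sum]
        ring
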